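/- arXiv:2204.08141 — 2 statements merged into one kernel-verified Lean document; each statement's English description precedes it below -/
import Mathlib

section
/- Under the bijection of dimension vectors with positive roots of type BC_n, the fiber over each root has size: exactly one indecomposable for roots ε_i - ε_j, ε_i, and 2ε_i, and exactly two indecomposables (namely U_{i,j} and U_{j,i}) for roots ε_i + ε_j with i < j. Consequently the total number of isomorphism classes of indecomposable Λ(n-1,1,1)-modules is n(n-1)/2 + n + n + 2·n(n-1)/2 = (3n² + n)/2. -/
/-- The standard basis vector ε_i of ℝ^n. -/
noncomputable def eps {n : ℕ} (i : Fin n) : Fin n → ℝ := Pi.single i 1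

/-- The standard basis vector e_i of ℤ^n. -/
def e {n : ℕ} (i : Fin n) : Fin n → ℤ := Pi.single i 1

/-- The parametrizing set of the indecomposable Λ(n-1,1,1)-modules:
U_{i,j} (1≤i,j≤n), V_i (1≤i≤n), W_{i,j} (1≤i≤j≤n-1) (0-indexed). -/
abbrev IndParam (n : ℕ) :=
  (Fin n × Fin n) ⊕ (Fin n ⊕ {p : Fin n × Fin n // p.1 ≤ p.2 ∧ p.2.val + 1 < n})

/-- The dimension vector of each indecomposable. -/
def dimVec {n : ℕ} : IndParam n → Fin n → ℤ
  | .inl (i, j) => (∑ k ∈ Finset.Ici i, e k) + ∑ k ∈ Finset.Ici j, e k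
  | .inr (.inl i) => ∑ k ∈ Finset.Ici i, e k
  | .inr (.inr p) => ∑ k ∈ Finset.Icc p.1.1 p.1.2, e k

/-- The linear map ℤ^n → ℝ^n sending e_i ↦ ε_i - ε_{i+1} (i < n), e_n ↦ ε_n. -/
noncomputable def toRoot {n : ℕ} (v : Fin n → ℤ) : Fin n → ℝ :=
  ∑ i : Fin n, (v i : ℝ) •
    (if h : i.val + 1 < n then eps i - eps ⟨i.val + 1, h⟩ else eps i)

/-- The root attached to an indecomposable module. -/
noncomputable def rootOf {n : ℕ} (m : IndParam n) : Fin n → ℝ := toRoot (dimVec m)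

lemma eps_apply {n : ℕ} (i x : Fin n) : eps i x = if x = i then 1 else 0 := by
  simp [eps, Pi.single_apply]

lemma S_apply {n : ℕ} (s : Finset (Fin n)) (x : Fin n) :
    (∑ k ∈ s, e k) x = if x ∈ s then 1 else 0 := by
  simp [e, Finset.sum_apply, Finset.sum_pi_single]

lemma toRoot_apply {n : ℕ} (v : Fin n → ℤ) (x : Fin n) :
    toRoot v x = (v x : ℝ) - (if h : 0 < x.val then (v ⟨x.val - 1, by omega⟩ : ℝ) else 0) := by
  unfold toRoot
  rw [Finset.sum_apply]
  have key : ∀ i : Fin n,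
      ((v i : ℝ) • (if h : i.val + 1 < n then eps i - eps ⟨i.val + 1, h⟩ else eps i)) x
      = (v i : ℝ) * (if x = i then 1 else 0) - (v i : ℝ) * (if x.val = i.val + 1 then 1 else 0) := by
    intro i
    rcases Nat.lt_or_ge (i.val + 1) n with h | h
    · simp only [dif_pos h, Pi.smul_apply, Pi.sub_apply, eps_apply, smul_eq_mul]
      rw [mul_sub]
      congr 2
      simp [Fin.ext_iff]
    · have hx : ¬ (x.val = i.val + 1) := by omega
      have h' : ¬ (i.val + 1 < n) := by omega
      rw [dif_neg h']
      rw [if_neg hx, mul_zero, sub_zero, Pi.smul_apply, smul_eq_mul, eps_apply]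
  rw [Finset.sum_congr rfl (fun i _ => key i), Finset.sum_sub_distrib]
  congr 1
  · rw [Finset.sum_eq_single x]
    · simp
    · intro b _ hb; simp [Ne.symm hb]
    · simp
  · rcases Nat.eq_zero_or_pos x.val with h | h
    · rw [dif_neg (by omega)]
      apply Finset.sum_eq_zero
      intro i _
      simp [show ¬ x.val = i.val + 1 by omega]
    · rw [dif_pos h, Finset.sum_eq_single (⟨x.val - 1, by omega⟩ : Fin n)]
      · rw [if_pos (by omega : x.val = x.val - 1 + 1), mul_one]
      · intro b _ hb
        have : ¬ x.val = b.val + 1 := by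
          intro hc; apply hb; apply Fin.ext; simp; omega
        simp [this]
      · simp

lemma rootOf_U {n : ℕ} (i j : Fin n) : rootOf (Sum.inl (i, j)) = eps i + eps j := by
  funext x
  show toRoot ((∑ k ∈ Finset.Ici i, e k) + ∑ k ∈ Finset.Ici j, e k) x = _
  rw [toRoot_apply]
  simp only [Pi.add_apply, S_apply, Finset.mem_Ici, eps_apply, Fin.le_def, Fin.ext_iff]
  split_ifs <;> push_cast <;> (try norm_num) <;> (try exfalso) <;> omega

lemma rootOf_V {n : ℕ} (i : Fin n) : rootOf (Sum.inr (Sum.inl i)) = eps i := by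
  funext x
  show toRoot (∑ k ∈ Finset.Ici i, e k) x = _
  rw [toRoot_apply]
  simp only [S_apply, Finset.mem_Ici, eps_apply, Fin.le_def, Fin.ext_iff]
  split_ifs <;> push_cast <;> (try norm_num) <;> (try exfalso) <;> omega

lemma rootOf_W {n : ℕ} (p : {p : Fin n × Fin n // p.1 ≤ p.2 ∧ p.2.val + 1 < n}) :
    rootOf (Sum.inr (Sum.inr p)) = eps p.1.1 - eps ⟨p.1.2.val + 1, p.2.2⟩ := by
  funext x
  show toRoot (∑ k ∈ Finset.Icc p.1.1 p.1.2, e k) x = _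
  rw [toRoot_apply]
  have hab := p.2.1
  rw [Fin.le_def] at hab
  simp only [S_apply, Finset.mem_Icc, Pi.sub_apply, eps_apply, Fin.le_def, Fin.ext_iff]
  split_ifs <;> push_cast <;> (try norm_num) <;> (try exfalso) <;> omega

set_option maxRecDepth 8000
set_option maxHeartbeats 1000000

/-- the fibers of the map indecomposables → positive roots of type
BC_n have cardinality one over ε_i-ε_j, ε_i and 2ε_i, and cardinality two
(consisting of U_{i,j} and U_{j,i}) over ε_i+ε_j (i<j); consequently the number
of indecomposables is (3n²+n)/2. -/
theorem stmt_6 (n : ℕ) :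
    (∀ i j : Fin n, i < j → {m : IndParam n | rootOf m = eps i - eps j}.ncard = 1) ∧
    (∀ i : Fin n, {m : IndParam n | rootOf m = eps i}.ncard = 1) ∧
    (∀ i : Fin n, {m : IndParam n | rootOf m = (2 : ℝ) • eps i}.ncard = 1) ∧
    (∀ i j : Fin n, i < j →
      {m : IndParam n | rootOf m = eps i + eps j} =
        {Sum.inl (i, j), Sum.inl (j, i)}) ∧
    2 * Nat.card (IndParam n) = 3 * n ^ 2 + n := by
  refine ⟨?_, ?_, ?_, ?_, ?_⟩
  · intro i j hij
    rw [Fin.lt_def] at hij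
    have hj : 0 < j.val := by omega
    have hjn : j.val - 1 + 1 < n := by omega
    rw [show {m : IndParam n | rootOf m = eps i - eps j} =
        {Sum.inr (Sum.inr ⟨(i, ⟨j.val - 1, by omega⟩),
          by refine ⟨?_, ?_⟩ <;> simp [Fin.le_def] <;> omega⟩)} from ?_, Set.ncard_singleton]
    ext m
    simp only [Set.mem_setOf_eq, Set.mem_singleton_iff]
    constructor
    · intro h
      rcases m with ⟨a, b⟩ | a | ⟨⟨a, b⟩, hab, hb⟩
      · exfalso
        rw [rootOf_U] at h
        have h1 := congrFun h j
        simp only [Pi.add_apply, Pi.sub_apply, eps_apply, Fin.ext_iff] at h1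
        split_ifs at h1 <;> (try norm_num at h1) <;> omega
      · exfalso
        rw [rootOf_V] at h
        have h1 := congrFun h j
        simp only [Pi.sub_apply, eps_apply, Fin.ext_iff] at h1
        split_ifs at h1 <;> (try norm_num at h1) <;> omega
      · rw [rootOf_W] at h
        rw [Fin.le_def] at hab
        have h1 := congrFun h a
        have h2 := congrFun h j
        simp only [Pi.sub_apply, eps_apply, Fin.ext_iff] at h1 h2
        simp only [Sum.inr.injEq, Subtype.mk.injEq, Prod.mk.injEq, Fin.ext_iff]
        split_ifs at h1 h2 <;> (try norm_num at h1) <;> (try norm_num at h2) <;> omega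
    · rintro rfl
      rw [rootOf_W]
      congr 1
      apply congrArg eps
      apply Fin.ext
      show j.val - 1 + 1 = j.val
      omega
  · intro i
    rw [show {m : IndParam n | rootOf m = eps i} = {Sum.inr (Sum.inl i)} from ?_,
      Set.ncard_singleton]
    ext m
    simp only [Set.mem_setOf_eq, Set.mem_singleton_iff]
    constructor
    · intro h
      rcases m with ⟨a, b⟩ | a | ⟨⟨a, b⟩, hab, hb⟩
      · exfalso
        rw [rootOf_U] at h
        have h1 := congrFun h a
        have h2 := congrFun h b
        simp only [Pi.add_apply, eps_apply, Fin.ext_iff] at h1 h2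
        split_ifs at h1 h2 <;> (try norm_num at h1) <;> (try norm_num at h2) <;> omega
      · rw [rootOf_V] at h
        have h1 := congrFun h a
        simp only [eps_apply, Fin.ext_iff] at h1
        simp only [Sum.inr.injEq, Sum.inl.injEq, Fin.ext_iff]
        split_ifs at h1 <;> (try norm_num at h1) <;> omega
      · exfalso
        rw [rootOf_W] at h
        rw [Fin.le_def] at hab
        have hab' : a.val ≤ b.val := hab
        have hb' : b.val + 1 < n := hb
        have h1 := congrFun h ⟨b.val + 1, hb⟩
        simp only [Pi.sub_apply, eps_apply, Fin.ext_iff] at h1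
        split_ifs at h1 <;> (try norm_num at h1) <;> omega
    · rintro rfl
      exact rootOf_V i
  · intro i
    rw [show {m : IndParam n | rootOf m = (2:ℝ) • eps i} = {Sum.inl (i, i)} from ?_,
      Set.ncard_singleton]
    ext m
    simp only [Set.mem_setOf_eq, Set.mem_singleton_iff]
    constructor
    · intro h
      rcases m with ⟨a, b⟩ | a | ⟨⟨a, b⟩, hab, hb⟩
      · rw [rootOf_U] at h
        have h1 := congrFun h a
        have h2 := congrFun h b
        simp only [Pi.add_apply, Pi.smul_apply, smul_eq_mul, eps_apply, Fin.ext_iff] at h1 h2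
        simp only [Sum.inl.injEq, Prod.mk.injEq, Fin.ext_iff]
        split_ifs at h1 h2 <;> (try norm_num at h1) <;> (try norm_num at h2) <;> omega
      · exfalso
        rw [rootOf_V] at h
        have h1 := congrFun h a
        simp only [Pi.smul_apply, smul_eq_mul, eps_apply, Fin.ext_iff] at h1
        split_ifs at h1 <;> (try norm_num at h1) <;> omega
      · exfalso
        rw [rootOf_W] at h
        rw [Fin.le_def] at hab
        have hab' : a.val ≤ b.val := hab
        have hb' : b.val + 1 < n := hb
        have h1 := congrFun h ⟨b.val + 1, hb⟩
        simp only [Pi.sub_apply, Pi.smul_apply, smul_eq_mul, eps_apply, Fin.ext_iff] at h1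
        split_ifs at h1 <;> (try norm_num at h1) <;> omega
    · rintro rfl
      rw [rootOf_U, two_smul]
  · intro i j hij
    rw [Fin.lt_def] at hij
    ext m
    simp only [Set.mem_setOf_eq, Set.mem_insert_iff, Set.mem_singleton_iff]
    constructor
    · intro h
      rcases m with ⟨a, b⟩ | a | ⟨⟨a, b⟩, hab, hb⟩
      · rw [rootOf_U] at h
        have h1 := congrFun h a
        have h2 := congrFun h b
        simp only [Pi.add_apply, eps_apply, Fin.ext_iff] at h1 h2
        simp only [Sum.inl.injEq, Prod.mk.injEq, Fin.ext_iff]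
        split_ifs at h1 h2 <;> (try norm_num at h1) <;> (try norm_num at h2) <;> omega
      · exfalso
        rw [rootOf_V] at h
        have h1 := congrFun h i
        have h2 := congrFun h j
        simp only [Pi.add_apply, eps_apply, Fin.ext_iff] at h1 h2
        split_ifs at h1 h2 <;> (try norm_num at h1) <;> (try norm_num at h2) <;> omega
      · exfalso
        rw [rootOf_W] at h
        rw [Fin.le_def] at hab
        have hab' : a.val ≤ b.val := hab
        have hb' : b.val + 1 < n := hb
        have h1 := congrFun h ⟨b.val + 1, hb⟩
        simp only [Pi.add_apply, Pi.sub_apply, eps_apply, Fin.ext_iff] at h1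
        split_ifs at h1 <;> (try norm_num at h1) <;> omega
    · rintro (rfl | rfl)
      · exact rootOf_U i j
      · rw [rootOf_U, add_comm]
  · classical
    have hcard : Nat.card (IndParam n)
        = n * n + n + (Finset.univ.filter
            fun p : Fin n × Fin n => p.1 ≤ p.2 ∧ p.2.val + 1 < n).card := by
      rw [Nat.card_eq_fintype_card, Fintype.card_sum, Fintype.card_sum, Fintype.card_prod,
        Fintype.card_fin, Fintype.card_subtype]
      ring
    have e1 : (Finset.univ.filter fun p : Fin n × Fin n => p.1 ≤ p.2 ∧ p.2.val + 1 < n).card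
        = (Finset.univ.filter fun p : Fin n × Fin n => p.1 < p.2).card := by
      apply Finset.card_nbij'
        (fun p => (p.1, if h : p.2.val + 1 < n then ⟨p.2.val + 1, h⟩ else p.2))
        (fun p => (p.1, ⟨p.2.val - 1, by omega⟩))
      · intro p hp
        simp only [Finset.mem_coe, Finset.mem_filter, Finset.mem_univ, true_and] at hp ⊢
        rw [dif_pos hp.2, Fin.lt_def]
        have := hp.1
        rw [Fin.le_def] at this
        simp
        omega
      · intro p hp
        simp only [Finset.mem_coe, Finset.mem_filter, Finset.mem_univ, true_and] at hp ⊢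
        rw [Fin.lt_def] at hp
        have h2 := p.2.isLt
        exact ⟨by rw [Fin.le_def]; exact Nat.le_sub_one_of_lt hp,
          by show p.2.val - 1 + 1 < n; omega⟩
      · intro p hp
        simp only [Finset.mem_coe, Finset.mem_filter, Finset.mem_univ, true_and] at hp
        dsimp only
        rw [dif_pos hp.2]
        exact Prod.ext rfl (Fin.ext (by simp))
      · intro p hp
        simp only [Finset.mem_coe, Finset.mem_filter, Finset.mem_univ, true_and] at hp
        rw [Fin.lt_def] at hp
        dsimp only
        rw [dif_pos (by have := p.2.isLt; omega)]
        exact Prod.ext rfl (Fin.ext (by simp; omega))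
    have e2 : (Finset.univ.filter fun p : Fin n × Fin n => p.1 < p.2).card
        = (Finset.univ.filter fun p : Fin n × Fin n => p.2 < p.1).card := by
      apply Finset.card_nbij' (fun p => (p.2, p.1)) (fun p => (p.2, p.1)) <;>
        simp [Finset.mem_filter, Set.MapsTo, Set.LeftInvOn, Set.RightInvOn]
    have e3 : (Finset.univ.filter fun p : Fin n × Fin n => p.1 < p.2)
          ∪ (Finset.univ.filter fun p : Fin n × Fin n => p.2 < p.1)
        = (Finset.univ : Finset (Fin n)).offDiag := by
      ext p
      simp only [Finset.mem_union, Finset.mem_filter, Finset.mem_univ, true_and,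
        Finset.mem_offDiag]
      constructor
      · rintro (h | h)
        · exact ne_of_lt h
        · exact (ne_of_lt h).symm
      · exact fun h => lt_or_gt_of_ne h
    have e4 : Disjoint (Finset.univ.filter fun p : Fin n × Fin n => p.1 < p.2)
        (Finset.univ.filter fun p : Fin n × Fin n => p.2 < p.1) := by
      rw [Finset.disjoint_left]
      intro p hp hq
      simp only [Finset.mem_filter, Finset.mem_univ, true_and] at hp hq
      exact absurd hq (lt_asymm hp)
    have e5 := Finset.card_union_of_disjoint e4
    rw [e3, Finset.offDiag_card, Finset.card_univ, Fintype.card_fin] at e5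
    have hn : n ≤ n * n := by
      rcases Nat.eq_zero_or_pos n with h | h
      · simp [h]
      · calc n = 1 * n := (one_mul n).symm
          _ ≤ n * n := Nat.mul_le_mul_right n h
    rw [hcard, e1, pow_two]
    omega
end

section
/- Define a bracket on the free ℤ[1/2]-module with basis {U_{i,j} : 1≤i,j≤n} ∪ {V_i : 1≤i≤n} ∪ {W_{i,j} : 1≤i≤j≤n-1} by: [W_{i,j},W_{l,m}] = δ_{j+1,l}W_{i,m} − δ_{m+1,i}W_{l,j}; [W_{i,j},V_l] = δ_{j+1,l}V_i; [W_{i,j},U_{l,m}] = δ_{j+1,m}U_{l,i} + δ_{j+1,l}U_{i,m}; [V_i,V_j] = U_{j,i} − U_{i,j}; all other brackets of basis elements (and the corresponding antisymmetric counterparts) zero. Then this bracket satisfies the Jacobi identity, making L(A)⊗ℤ[1/2] a Lie algebra. -/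
/-- Index set of the isomorphism classes of indecomposable Λ(n-1,1,1)-modules:
`Sum.inl (i,j)` is U_{i,j} (1≤i,j≤n), `Sum.inr (Sum.inl i)` is V_i, and
`Sum.inr (Sum.inr ⟨(i,j),_⟩)` is W_{i,j} (1≤i≤j≤n-1), all 0-indexed. -/
abbrev LIdx (n : ℕ) :=
  (Fin n × Fin n) ⊕ (Fin n ⊕ {p : Fin n × Fin n // p.1 ≤ p.2 ∧ p.2.val + 1 < n})

/-- Structure constants of Riedtmann's Lie algebra of Λ(n-1,1,1)
(Proposition 4.2 of the paper). -/
noncomputable def cst {n : ℕ} (R : Type) [CommRing R] :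
    LIdx n → LIdx n → (LIdx n →₀ R)
  | .inr (.inr p), .inr (.inr q) =>
      (if h : p.1.2.val + 1 = q.1.1.val then
        Finsupp.single (.inr (.inr ⟨(p.1.1, q.1.2), by
          obtain ⟨h1, _⟩ := p.2; obtain ⟨h2, h3⟩ := q.2
          refine ⟨?_, h3⟩
          change p.1.1 ≤ q.1.2
          rw [Fin.le_def] at h1 h2 ⊢
          omega⟩)) (1 : R)
      else 0)
      - (if h : q.1.2.val + 1 = p.1.1.val then
        Finsupp.single (.inr (.inr ⟨(q.1.1, p.1.2), by
          obtain ⟨h1, h4⟩ := p.2; obtain ⟨h2, _⟩ := q.2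
          refine ⟨?_, h4⟩
          change q.1.1 ≤ p.1.2
          rw [Fin.le_def] at h1 h2 ⊢
          omega⟩)) (1 : R)
      else 0)
  | .inr (.inr p), .inr (.inl l) =>
      if p.1.2.val + 1 = l.val then Finsupp.single (.inr (.inl p.1.1)) (1 : R) else 0
  | .inr (.inl l), .inr (.inr p) =>
      -(if p.1.2.val + 1 = l.val then Finsupp.single (.inr (.inl p.1.1)) (1 : R) else 0)
  | .inr (.inr p), .inl (l, m) =>
      (if p.1.2.val + 1 = m.val then Finsupp.single (.inl (l, p.1.1)) (1 : R) else 0)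
      + (if p.1.2.val + 1 = l.val then Finsupp.single (.inl (p.1.1, m)) (1 : R) else 0)
  | .inl (l, m), .inr (.inr p) =>
      -((if p.1.2.val + 1 = m.val then Finsupp.single (.inl (l, p.1.1)) (1 : R) else 0)
        + (if p.1.2.val + 1 = l.val then Finsupp.single (.inl (p.1.1, m)) (1 : R) else 0))
  | .inr (.inl i), .inr (.inl j) =>
      Finsupp.single (.inl (j, i)) (1 : R) - Finsupp.single (.inl (i, j)) (1 : R)
  | _, _ => 0

/-- The bilinear bracket on the free module on the indecomposables determined by
the structure constants of Proposition 4.2. -/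
noncomputable def brkt {n : ℕ} {R : Type} [CommRing R] (x y : LIdx n →₀ R) :
    LIdx n →₀ R :=
  Finsupp.sum x fun a r => Finsupp.sum y fun b s => (r * s) • cst R a b

/-- Basis element U_{i,j}. -/
noncomputable def Ub {n : ℕ} (R : Type) [CommRing R] (i j : Fin n) : LIdx n →₀ R :=
  Finsupp.single (.inl (i, j)) 1

/-- Basis element V_i. -/
noncomputable def Vb {n : ℕ} (R : Type) [CommRing R] (i : Fin n) : LIdx n →₀ R :=
  Finsupp.single (.inr (.inl i)) 1

/-- Basis element W_{i,j} (i ≤ j ≤ n-1, 0-indexed j+1 < n). -/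
noncomputable def Wb {n : ℕ} (R : Type) [CommRing R] (i j : Fin n)
    (h : i ≤ j ∧ j.val + 1 < n) : LIdx n →₀ R :=
  Finsupp.single (.inr (.inr ⟨(i, j), h⟩)) 1

/-- The ring ℤ[1/2]. -/
abbrev ZHalf : Type := Localization.Away (2 : ℤ)

section
variable {n : ℕ} {R : Type} [CommRing R]

lemma brkt_zero_left (y : LIdx n →₀ R) : brkt 0 y = 0 := by simp [brkt]

lemma brkt_zero_right (x : LIdx n →₀ R) : brkt x 0 = 0 := by simp [brkt]

lemma brkt_single_single (a b : LIdx n) (r s : R) :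
    brkt (Finsupp.single a r) (Finsupp.single b s) = (r * s) • cst R a b := by
  unfold brkt
  rw [Finsupp.sum_single_index, Finsupp.sum_single_index]
  · simp
  · simp [Finsupp.sum_single_index]

lemma brkt_add_left (x x' y : LIdx n →₀ R) : brkt (x + x') y = brkt x y + brkt x' y := by
  unfold brkt
  apply Finsupp.sum_add_index' <;> intros <;> simp [add_mul, add_smul, Finsupp.sum_add]

lemma brkt_add_right (x y y' : LIdx n →₀ R) : brkt x (y + y') = brkt x y + brkt x y' := by
  unfold brkt
  rw [← Finsupp.sum_add]
  apply Finsupp.sum_congr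
  intro a _
  apply Finsupp.sum_add_index' <;> intros <;> simp [mul_add, add_smul]

lemma brkt_smul_left (k : R) (x y : LIdx n →₀ R) : brkt (k • x) y = k • brkt x y := by
  unfold brkt
  rw [Finsupp.sum_smul_index', Finsupp.smul_sum]
  · apply Finsupp.sum_congr; intro a _
    rw [Finsupp.smul_sum]
    apply Finsupp.sum_congr; intro b _
    rw [smul_eq_mul, mul_assoc, mul_smul]
  · intro a; simp

lemma brkt_smul_right (k : R) (x y : LIdx n →₀ R) : brkt x (k • y) = k • brkt x y := by
  unfold brkt
  rw [Finsupp.smul_sum]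
  apply Finsupp.sum_congr; intro a _
  rw [Finsupp.sum_smul_index', Finsupp.smul_sum]
  · apply Finsupp.sum_congr; intro b _
    rw [smul_eq_mul, smul_smul]
    ring_nf
  · intro b; simp

lemma brkt_neg_left (x y : LIdx n →₀ R) : brkt (-x) y = -brkt x y := by
  have h := brkt_add_left x (-x) y
  simp only [add_neg_cancel, brkt_zero_left] at h
  exact eq_neg_of_add_eq_zero_right h.symm

lemma brkt_neg_right (x y : LIdx n →₀ R) : brkt x (-y) = -brkt x y := by
  have h := brkt_add_right x y (-y)
  simp only [add_neg_cancel, brkt_zero_right] at h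
  exact eq_neg_of_add_eq_zero_right h.symm

lemma brkt_sub_left (x x' y : LIdx n →₀ R) : brkt (x - x') y = brkt x y - brkt x' y := by
  rw [sub_eq_add_neg, brkt_add_left, brkt_neg_left, sub_eq_add_neg]

end
section
variable {n : ℕ} {R : Type} [CommRing R]

lemma cst_anti (a b : LIdx n) : cst R a b = - cst R b a := by
  rcases a with ⟨i,j⟩ | i | ⟨⟨i,j⟩,hij⟩ <;> rcases b with ⟨l,m⟩ | l | ⟨⟨l,m⟩,hlm⟩ <;>
    simp only [cst, neg_sub, neg_neg, neg_zero]

end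
section
variable {n : ℕ} {R : Type} [CommRing R]

lemma brkt_anti (x y : LIdx n →₀ R) : brkt x y = - brkt y x := by
  induction x using Finsupp.induction_linear with
  | zero => simp [brkt_zero_left, brkt_zero_right]
  | add f g hf hg => rw [brkt_add_left, brkt_add_right, hf, hg]; abel
  | single a r =>
    induction y using Finsupp.induction_linear with
    | zero => simp [brkt_zero_left, brkt_zero_right]
    | add f g hf hg => rw [brkt_add_left, brkt_add_right, hf, hg]; abel
    | single b s =>
      rw [brkt_single_single, brkt_single_single, cst_anti, mul_comm]
      simp

lemma brkt_dite_left {C : Prop} [Decidable C] (f : C → (LIdx n →₀ R))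
    (z : LIdx n →₀ R) :
    brkt (dite C f fun _ => 0) z = dite C (fun h => brkt (f h) z) fun _ => 0 := by
  split_ifs <;> simp [brkt_zero_left]

lemma brkt_ite_left {C : Prop} [Decidable C] (x z : LIdx n →₀ R) :
    brkt (ite C x 0) z = ite C (brkt x z) 0 := by
  split_ifs <;> simp [brkt_zero_left]

end
section
variable {n : ℕ} {R : Type} [CommRing R]

set_option maxHeartbeats 1000000 in
lemma jacobi_single (a b c : LIdx n) :
    brkt (cst R a b) (Finsupp.single c 1) + brkt (cst R b c) (Finsupp.single a 1)
      + brkt (cst R c a) (Finsupp.single b 1) = 0 := by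
  obtain ⟨i,j⟩ | i | ⟨⟨i,j⟩,hij⟩ := a <;>
  obtain ⟨l,m⟩ | l | ⟨⟨l,m⟩,hlm⟩ := b <;>
  obtain ⟨u,v⟩ | u | ⟨⟨u,v⟩,huv⟩ := c <;>
  simp only [cst, brkt_zero_left, brkt_sub_left, brkt_add_left, brkt_neg_left,
    brkt_dite_left, brkt_ite_left, brkt_single_single, one_mul, one_smul,
    sub_zero, zero_sub, add_zero, zero_add, neg_zero, neg_neg, add_neg_cancel,
    neg_add_cancel] <;>
  first
    | rfl
    | (split_ifs <;> first | abel | (exfalso; omega))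

lemma jacobi (x y z : LIdx n →₀ R) :
    brkt (brkt x y) z + brkt (brkt y z) x + brkt (brkt z x) y = 0 := by
  induction x using Finsupp.induction_linear with
  | zero => simp [brkt_zero_left, brkt_zero_right]
  | add f g hf hg =>
    simp only [brkt_add_left, brkt_add_right]
    calc brkt (brkt f y) z + brkt (brkt g y) z + (brkt (brkt y z) f + brkt (brkt y z) g)
          + (brkt (brkt z f) y + brkt (brkt z g) y)
        = (brkt (brkt f y) z + brkt (brkt y z) f + brkt (brkt z f) y)
          + (brkt (brkt g y) z + brkt (brkt y z) g + brkt (brkt z g) y) := by abel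
      _ = 0 := by rw [hf, hg, add_zero]
  | single a r =>
    induction y using Finsupp.induction_linear with
    | zero => simp [brkt_zero_left, brkt_zero_right]
    | add f g hf hg =>
      simp only [brkt_add_left, brkt_add_right]
      calc brkt (brkt (Finsupp.single a r) f) z + brkt (brkt (Finsupp.single a r) g) z
            + (brkt (brkt f z) (Finsupp.single a r) + brkt (brkt g z) (Finsupp.single a r))
            + (brkt (brkt z (Finsupp.single a r)) f + brkt (brkt z (Finsupp.single a r)) g)
          = (brkt (brkt (Finsupp.single a r) f) z + brkt (brkt f z) (Finsupp.single a r)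
              + brkt (brkt z (Finsupp.single a r)) f)
            + (brkt (brkt (Finsupp.single a r) g) z + brkt (brkt g z) (Finsupp.single a r)
              + brkt (brkt z (Finsupp.single a r)) g) := by abel
        _ = 0 := by rw [hf, hg, add_zero]
    | single b s =>
      induction z using Finsupp.induction_linear with
      | zero => simp [brkt_zero_left, brkt_zero_right]
      | add f g hf hg =>
        simp only [brkt_add_left, brkt_add_right]
        calc brkt (brkt (Finsupp.single a r) (Finsupp.single b s)) f
              + brkt (brkt (Finsupp.single a r) (Finsupp.single b s)) g
              + (brkt (brkt (Finsupp.single b s) f) (Finsupp.single a r)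
                + brkt (brkt (Finsupp.single b s) g) (Finsupp.single a r))
              + (brkt (brkt f (Finsupp.single a r)) (Finsupp.single b s)
                + brkt (brkt g (Finsupp.single a r)) (Finsupp.single b s))
            = (brkt (brkt (Finsupp.single a r) (Finsupp.single b s)) f
                + brkt (brkt (Finsupp.single b s) f) (Finsupp.single a r)
                + brkt (brkt f (Finsupp.single a r)) (Finsupp.single b s))
              + (brkt (brkt (Finsupp.single a r) (Finsupp.single b s)) g
                + brkt (brkt (Finsupp.single b s) g) (Finsupp.single a r)
                + brkt (brkt g (Finsupp.single a r)) (Finsupp.single b s)) := by abel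
          _ = 0 := by rw [hf, hg, add_zero]
      | single c t =>
        have ea : (Finsupp.single a r : LIdx n →₀ R) = r • Finsupp.single a 1 := by
          rw [Finsupp.smul_single', mul_one]
        have eb : (Finsupp.single b s : LIdx n →₀ R) = s • Finsupp.single b 1 := by
          rw [Finsupp.smul_single', mul_one]
        have ec : (Finsupp.single c t : LIdx n →₀ R) = t • Finsupp.single c 1 := by
          rw [Finsupp.smul_single', mul_one]
        rw [brkt_single_single a b, brkt_single_single b c, brkt_single_single c a,
          brkt_smul_left, brkt_smul_left, brkt_smul_left, ea, eb, ec,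
          brkt_smul_right, brkt_smul_right, brkt_smul_right,
          smul_smul, smul_smul, smul_smul]
        have c2 : s * t * r = r * s * t := by ring
        have c3 : t * r * s = r * s * t := by ring
        rw [c2, c3, ← smul_add, ← smul_add, jacobi_single, smul_zero]
end


/-- the bracket defined on the free ℤ[1/2]-module on the
indecomposables by the structure constants of Proposition 4.2 is antisymmetric
and satisfies the Jacobi identity, i.e. L(A)⊗ℤ[1/2] is a Lie algebra. -/
theorem stmt_13 (n : ℕ) (hn : 2 ≤ n) :
    (∀ x y : LIdx n →₀ ZHalf, brkt x y = -brkt y x) ∧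
    (∀ x y z : LIdx n →₀ ZHalf,
      brkt (brkt x y) z + brkt (brkt y z) x + brkt (brkt z x) y = 0) := by
  exact ⟨fun x y => brkt_anti x y, fun x y z => jacobi x y z⟩
end
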